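/- arXiv:2109.10015 — 6 statements merged into one kernel-verified Lean document; each statement's English description precedes it below -/
import Mathlib

section
/- For a prime power q ≥ 2 and positive integers n, n', the product ∏_{i=1}^{n'} (1 - q^{-i})/(1 - q^{-n-i}) is strictly greater than 1 - 3/(2q). -/
/-- Weierstrass product inequality. -/
lemma weier_aux (s : Finset ℕ) (f : ℕ → ℝ) (h0 : ∀ i ∈ s, 0 ≤ f i)
    (h1 : ∀ i ∈ s, f i ≤ 1) :
    1 - ∑ i ∈ s, f i ≤ ∏ i ∈ s, (1 - f i) := by
  induction s using Finset.cons_induction with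
  | empty => simp
  | cons a s ha ih =>
    rw [Finset.sum_cons, Finset.prod_cons]
    have h0a := h0 a (Finset.mem_cons_self a s)
    have h1a := h1 a (Finset.mem_cons_self a s)
    have ih' := ih (fun i hi => h0 i (Finset.mem_cons_of_mem hi))
      (fun i hi => h1 i (Finset.mem_cons_of_mem hi))
    have hsum : 0 ≤ ∑ i ∈ s, f i :=
      Finset.sum_nonneg fun i hi => h0 i (Finset.mem_cons_of_mem hi)
    nlinarith [mul_le_mul_of_nonneg_left ih' (by linarith : (0:ℝ) ≤ 1 - f a)]

/-- For q ≥ 2 and positive integers n, n', the product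
∏_{i=1}^{n'} (1 - q^{-i})/(1 - q^{-n-i}) is strictly greater than 1 - 3/(2q). -/
theorem stmt_1 (q : ℝ) (hq : 2 ≤ q) (n n' : ℕ) (hn : 0 < n) (hn' : 0 < n') :
    1 - 3 / (2 * q) <
      ∏ i ∈ Finset.Icc 1 n',
        (1 - q ^ (-(i : ℤ))) / (1 - q ^ (-((n : ℤ) + (i : ℤ)))) := by
  have hq0 : (0:ℝ) < q := by linarith
  set x : ℝ := q⁻¹ with hxdef
  have hx0 : 0 < x := inv_pos.mpr hq0
  have hx2 : x ≤ 1/2 := by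
    rw [hxdef]
    rw [show (1:ℝ)/2 = 2⁻¹ by norm_num]
    exact inv_anti₀ (by norm_num) hq
  have hx1 : x < 1 := by linarith
  -- rewrite powers
  have hpow : ∀ k : ℕ, q ^ (-(k:ℤ)) = x ^ k := by
    intro k
    rw [zpow_neg, zpow_natCast, hxdef, inv_pow]
  have hxk : ∀ k : ℕ, 0 < k → 0 < x ^ k ∧ x ^ k ≤ x := by
    intro k hk
    refine ⟨pow_pos hx0 k, ?_⟩
    calc x ^ k ≤ x ^ 1 := pow_le_pow_of_le_one (le_of_lt hx0) (le_of_lt hx1) hk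
      _ = x := pow_one x
  -- Step 1: each ratio ≥ 1 - x^i
  have step1 : ∏ i ∈ Finset.Icc 1 n', (1 - x ^ i) ≤
      ∏ i ∈ Finset.Icc 1 n',
        (1 - q ^ (-(i : ℤ))) / (1 - q ^ (-((n : ℤ) + (i : ℤ)))) := by
    apply Finset.prod_le_prod
    · intro i hi
      obtain ⟨h1i, _⟩ := Finset.mem_Icc.mp hi
      have := hxk i h1i
      linarith [this.2]
    · intro i hi
      obtain ⟨h1i, _⟩ := Finset.mem_Icc.mp hi
      have hni : q ^ (-((n : ℤ) + (i : ℤ))) = x ^ (n + i) := by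
        rw [show -((n:ℤ) + (i:ℤ)) = -((n + i : ℕ) : ℤ) by push_cast; ring, hpow]
      rw [hpow i, hni]
      have hd := hxk (n + i) (by omega)
      have hd1 : 0 < 1 - x ^ (n + i) := by linarith [hd.2]
      have hnum : 0 ≤ 1 - x ^ i := by linarith [(hxk i h1i).2]
      rw [le_div_iff₀ hd1]
      nlinarith [pow_pos hx0 (n+i)]
  -- Step 2: split off i = 1
  have hsplit : ∏ i ∈ Finset.Icc 1 n', (1 - x ^ i) =
      (1 - x) * ∏ i ∈ Finset.Icc 2 n', (1 - x ^ i) := by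
    rw [Finset.Icc_eq_cons_Ioc hn', Finset.prod_cons, pow_one, ← Finset.Icc_add_one_left_eq_Ioc]
    rfl
  -- Step 3: Weierstrass on the tail
  have step3 : 1 - ∑ i ∈ Finset.Icc 2 n', x ^ i ≤ ∏ i ∈ Finset.Icc 2 n', (1 - x ^ i) := by
    apply weier_aux
    · intro i hi; exact le_of_lt (pow_pos hx0 i)
    · intro i hi
      obtain ⟨h2i, _⟩ := Finset.mem_Icc.mp hi
      linarith [(hxk i (by omega)).2]
  -- Step 4: sum bound
  have step4 : ∑ i ∈ Finset.Icc 2 n', x ^ i < 2 * x ^ 2 := by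
    have hsum : ∑ i ∈ Finset.Icc 2 n', x ^ i = x ^ 2 * ∑ j ∈ Finset.range (n' + 1 - 2), x ^ j := by
      rw [show Finset.Icc 2 n' = Finset.Ico 2 (n'+1) from by rw [Finset.Ico_add_one_right_eq_Icc],
        Finset.sum_Ico_eq_sum_range, Finset.mul_sum]
      apply Finset.sum_congr rfl
      intro j _
      rw [← pow_add]
    rw [hsum]
    have hgeom : ∑ j ∈ Finset.range (n' + 1 - 2), x ^ j < 2 := by
      have := geom_sum_eq (ne_of_lt hx1) (n' + 1 - 2)
      rw [this]
      rw [div_lt_iff_of_neg (by linarith : x - 1 < 0)]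
      have : 0 < x ^ (n' + 1 - 2) := pow_pos hx0 _
      nlinarith
    nlinarith [sq_nonneg x, pow_pos hx0 2]
  -- Step 5: combine
  have hfin : 1 - 3 / (2 * q) ≤ (1 - x) * (1 - 2 * x ^ 2) := by
    have h32 : 3 / (2 * q) = (3/2) * x := by
      rw [hxdef]; field_simp
    rw [h32]
    nlinarith [mul_nonneg hx0.le (sq_nonneg (x - 1/2))]
  have htail : (1 - x) * (1 - 2 * x ^ 2) < ∏ i ∈ Finset.Icc 1 n', (1 - x ^ i) := by
    rw [hsplit]
    have h1x : 0 < 1 - x := by linarith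
    have : 1 - 2 * x ^ 2 < ∏ i ∈ Finset.Icc 2 n', (1 - x ^ i) := by
      calc 1 - 2 * x ^ 2 < 1 - ∑ i ∈ Finset.Icc 2 n', x ^ i := by linarith
        _ ≤ _ := step3
    exact mul_lt_mul_of_pos_left this h1x
  linarith
end

section
/- For any real q ≥ 2, ∏_{i=1}^{∞} (1 - q^{-i}) > 1 - q^{-1} - q^{-2}. -/
lemma aux_prod_ge_one_sub_sum (g : ℕ → ℝ) (hg0 : ∀ i, 0 ≤ g i) (hg1 : ∀ i, g i ≤ 1) :
    ∀ n, 1 - ∑ i ∈ Finset.range n, g i ≤ ∏ i ∈ Finset.range n, (1 - g i) := by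
  intro n
  induction n with
  | zero => simp
  | succ n ih =>
    rw [Finset.sum_range_succ, Finset.prod_range_succ]
    have h1 : (1 - ∑ i ∈ Finset.range n, g i) * (1 - g n) ≤
        (∏ i ∈ Finset.range n, (1 - g i)) * (1 - g n) := by
      apply mul_le_mul_of_nonneg_right ih
      linarith [hg1 n]
    have h2 : 0 ≤ ∑ i ∈ Finset.range n, g i := Finset.sum_nonneg fun i _ => hg0 i
    nlinarith [hg0 n]

/-- For any real q ≥ 2, ∏_{i=1}^∞ (1 - q^{-i}) > 1 - q^{-1} - q^{-2}. -/
theorem stmt_2 (q : ℝ) (hq : 2 ≤ q) :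
    1 - q ^ (-1 : ℤ) - q ^ (-2 : ℤ) < ∏' i : ℕ, (1 - q ^ (-((i : ℤ) + 1))) := by
  have hq0 : 0 < q := by linarith
  set a : ℝ := q⁻¹ with ha
  have ha0 : 0 < a := inv_pos.mpr hq0
  have ha2 : a ≤ 1/2 := by
    rw [ha]
    rw [inv_le_comm₀ (by linarith) (by norm_num)]
    simpa using hq
  have ha1 : a < 1 := by linarith
  have hkey : ∀ i : ℕ, q ^ (-((i : ℤ) + 1)) = a ^ (i + 1) := by
    intro i
    rw [ha, ← zpow_natCast q⁻¹ (i+1), inv_zpow, ← zpow_neg]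
    norm_num
  have hrw1 : q ^ (-1 : ℤ) = a := by rw [ha, zpow_neg, zpow_one]
  have hrw2 : q ^ (-2 : ℤ) = a ^ 2 := by
    rw [ha, inv_pow, ← zpow_natCast q 2, ← zpow_neg]
    norm_num
  rw [hrw1, hrw2]
  set f : ℕ → ℝ := fun i => 1 - q ^ (-((i : ℤ) + 1)) with hf
  have hfeq : ∀ i, f i = 1 - a ^ (i + 1) := fun i => by simp only [hf]; rw [hkey i]
  -- lower bound constant
  set L : ℝ := (1 - a) * (1 - a ^ 2) * (1 - a ^ 3 / (1 - a)) with hL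
  have hLgt : 1 - a - a ^ 2 < L := by
    rw [hL]
    rw [div_eq_mul_inv]
    have h1a : (0:ℝ) < 1 - a := by linarith
    rw [show (1 - a) * (1 - a ^ 2) * (1 - a ^ 3 * (1 - a)⁻¹)
        = (1 - a ^ 2) * ((1 - a) - a ^ 3 * ((1-a) * (1-a)⁻¹)) by ring,
      mul_inv_cancel₀ (ne_of_gt h1a)]
    nlinarith [sq_nonneg a, pow_pos ha0 3, pow_pos ha0 2]
  have hfbound : ∀ i, 0 ≤ a ^ (i + 1) ∧ a ^ (i + 1) ≤ 1 := by
    intro i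
    exact ⟨pow_nonneg ha0.le _, pow_le_one₀ ha0.le ha1.le⟩
  -- every partial product is ≥ L
  have hpartial : ∀ n, L ≤ ∏ i ∈ Finset.range n, f i := by
    have key : ∀ m, L ≤ ∏ i ∈ Finset.range (2 + m), f i := by
      intro m
      rw [Finset.prod_range_add]
      have h01 : ∏ i ∈ Finset.range 2, f i = (1 - a) * (1 - a ^ 2) := by
        rw [Finset.prod_range_succ, Finset.prod_range_one, hfeq 0, hfeq 1]
        norm_num
      rw [h01]
      have htail : 1 - a ^ 3 / (1 - a) ≤ ∏ i ∈ Finset.range m, f (2 + i) := by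
        have : ∀ i, f (2 + i) = 1 - a ^ (i + 3) := by
          intro i; rw [hfeq (2 + i)]; ring_nf
        calc 1 - a ^ 3 / (1 - a)
            ≤ 1 - ∑ i ∈ Finset.range m, a ^ (i + 3) := by
              have hsum : ∑ i ∈ Finset.range m, a ^ (i + 3)
                  = a ^ 3 * ∑ i ∈ Finset.range m, a ^ i := by
                rw [Finset.mul_sum]
                apply Finset.sum_congr rfl
                intro i _; rw [pow_add]; ring
              have hgeom : ∑ i ∈ Finset.range m, a ^ i ≤ (1 - a)⁻¹ := by
                rw [← tsum_geometric_of_lt_one ha0.le ha1]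
                exact Summable.sum_le_tsum _ (fun i _ => pow_nonneg ha0.le i)
                  (summable_geometric_of_lt_one ha0.le ha1)
              have : a ^ 3 * ∑ i ∈ Finset.range m, a ^ i ≤ a ^ 3 * (1 - a)⁻¹ :=
                mul_le_mul_of_nonneg_left hgeom (pow_nonneg ha0.le 3)
              rw [hsum, div_eq_mul_inv]
              linarith
          _ ≤ ∏ i ∈ Finset.range m, (1 - a ^ (i + 3)) :=
              aux_prod_ge_one_sub_sum (fun i => a ^ (i + 3))
                (fun i => pow_nonneg ha0.le _) (fun i => pow_le_one₀ ha0.le ha1.le) m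
          _ = ∏ i ∈ Finset.range m, f (2 + i) := by
              apply Finset.prod_congr rfl
              intro i _; rw [this i]
      rw [hL]
      apply mul_le_mul_of_nonneg_left htail
      have := hfbound 1
      nlinarith [sq_nonneg a]
    intro n
    match n with
    | 0 =>
      simp only [Finset.range_zero, Finset.prod_empty]
      rw [hL]
      have h1a : (0:ℝ) < 1 - a := by linarith
      have h1 : 1 - a ≤ 1 := by linarith
      have h2 : 1 - a ^ 2 ≤ 1 := by nlinarith
      have h3 : 1 - a ^ 3 / (1 - a) ≤ 1 := by
        have : 0 ≤ a ^ 3 / (1 - a) := div_nonneg (pow_nonneg ha0.le _) h1a.le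
        linarith
      have h2' : (0:ℝ) ≤ 1 - a ^ 2 := by nlinarith
      have h3' : (0:ℝ) ≤ 1 - a ^ 3 / (1 - a) := by
        have : a ^ 3 / (1 - a) ≤ 1/2 := by
          rw [div_le_iff₀ h1a]; nlinarith
        linarith
      have h1' : (0:ℝ) ≤ 1 - a := h1a.le
      calc (1 - a) * (1 - a ^ 2) * (1 - a ^ 3 / (1 - a))
          ≤ (1 - a) * (1 - a ^ 2) * 1 := mul_le_mul_of_nonneg_left h3 (by positivity)
        _ ≤ 1 * 1 * 1 := by
            apply mul_le_mul _ le_rfl zero_le_one (by norm_num)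
            exact mul_le_mul h1 h2 h2' zero_le_one
        _ = 1 := by ring
    | 1 =>
      rw [Finset.prod_range_one, hfeq 0, hL]
      have h1a : (0:ℝ) < 1 - a := by linarith
      have h2' : (0:ℝ) ≤ 1 - a ^ 2 := by nlinarith
      have h3' : (0:ℝ) ≤ 1 - a ^ 3 / (1 - a) := by
        have : a ^ 3 / (1 - a) ≤ 1/2 := by
          rw [div_le_iff₀ h1a]; nlinarith
        linarith
      have h2 : 1 - a ^ 2 ≤ 1 := by nlinarith
      have h3 : 1 - a ^ 3 / (1 - a) ≤ 1 := by
        have : 0 ≤ a ^ 3 / (1 - a) := div_nonneg (pow_nonneg ha0.le _) h1a.le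
        linarith
      calc (1 - a) * (1 - a ^ 2) * (1 - a ^ 3 / (1 - a))
          ≤ (1 - a) * 1 * 1 := by
            apply mul_le_mul (mul_le_mul le_rfl h2 h2' h1a.le) h3 h3'
            positivity
        _ = 1 - a := by ring
        _ ≤ 1 - a ^ 0 * a := by simp
    | (n + 2) => have := key n; rwa [Nat.add_comm] at this
  by_cases hmul : Multipliable f
  · have htendsto := hmul.hasProd.tendsto_prod_nat
    have hge : L ≤ ∏' i, f i := ge_of_tendsto' htendsto hpartial
    calc 1 - a - a ^ 2 < L := hLgt
      _ ≤ _ := hge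
  · rw [tprod_eq_one_of_not_multipliable hmul]
    nlinarith
end

section
/- Define ζ_n(q) = (1 - (-q)^{-n+1})(1 - (-q)^{-n}). For q ≥ 2 and integers 1 ≤ i < j, ζ_{2i+2}(q)·ζ_{2j}(q) < ζ_{2i}(q)·ζ_{2j+2}(q). -/
/-- With ζ_n(q) = (1 - (-q)^{-n+1})(1 - (-q)^{-n}), q ≥ 2 and 1 ≤ i < j,
ζ_{2i+2} ζ_{2j} < ζ_{2i} ζ_{2j+2}. -/
theorem stmt_6 (q : ℝ) (hq : 2 ≤ q) (ζ : ℕ → ℝ)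
    (hζ : ∀ n : ℕ, ζ n = (1 - (-q) ^ (-(n : ℤ) + 1)) * (1 - (-q) ^ (-(n : ℤ))))
    (i j : ℕ) (hi : 1 ≤ i) (hij : i < j) :
    ζ (2 * i + 2) * ζ (2 * j) < ζ (2 * i) * ζ (2 * j + 2) := by
  have hq0 : (0:ℝ) < q := by linarith
  have hqne : q ≠ 0 := ne_of_gt hq0
  set t : ℝ := q⁻¹ with htdef
  have ht0 : 0 < t := inv_pos.mpr hq0
  have ht : t ≤ 1/2 := by
    rw [htdef, inv_le_iff_one_le_mul₀ hq0]
    linarith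
  have ht1 : t < 1 := by linarith
  -- key formula for even indices
  have key : ∀ m : ℕ, 1 ≤ m → ζ (2*m) = (1 + t^(2*m-1)) * (1 - t^(2*m)) := by
    intro m hm
    rw [hζ]
    have h1 : (-(↑(2*m) : ℤ)) = -((2*m : ℕ) : ℤ) := by push_cast; ring
    have h2 : (-(↑(2*m) : ℤ) + 1) = -(((2*m-1 : ℕ)) : ℤ) := by
      have : (2*m-1 : ℕ) + 1 = 2*m := by omega
      push_cast [this]
      omega
    rw [h1, h2, zpow_neg, zpow_neg, zpow_natCast, zpow_natCast]
    have hodd : Odd (2*m-1) := ⟨m-1, by omega⟩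
    have heven : Even (2*m) := ⟨m, by ring⟩
    rw [hodd.neg_pow, heven.neg_pow, inv_neg, ← inv_pow, ← inv_pow]
    ring
  set a : ℝ := t^(2*i-1) with hadef
  set b : ℝ := t^(2*j-1) with hbdef
  have ha0 : 0 < a := pow_pos ht0 _
  have hb0 : 0 < b := pow_pos ht0 _
  have hat : a ≤ t := by
    calc a ≤ t^1 := pow_le_pow_of_le_one (le_of_lt ht0) (le_of_lt ht1) (by omega)
    _ = t := pow_one t
  have hba : b ≤ a * t^2 := by
    rw [hadef, hbdef, ← pow_add]
    exact pow_le_pow_of_le_one (le_of_lt ht0) (le_of_lt ht1) (by omega)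
  have e2i : t^(2*i) = a * t := by
    rw [hadef, ← pow_succ]
    congr 1
    omega
  have e2i1 : t^(2*(i+1)-1) = a * t^2 := by
    rw [hadef, ← pow_add]
    congr 1
    omega
  have e2i2 : t^(2*(i+1)) = a * t^3 := by
    rw [hadef, ← pow_add]
    congr 1
    omega
  have e2j : t^(2*j) = b * t := by
    rw [hbdef, ← pow_succ]
    congr 1
    omega
  have e2j1 : t^(2*(j+1)-1) = b * t^2 := by
    rw [hbdef, ← pow_add]
    congr 1
    omega
  have e2j2 : t^(2*(j+1)) = b * t^3 := by
    rw [hbdef, ← pow_add]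
    congr 1
    omega
  have hj1 : 1 ≤ j := by omega
  have hζ2i : ζ (2*i) = (1 + a) * (1 - a*t) := by rw [key i hi, e2i]
  have hζ2i2 : ζ (2*i+2) = (1 + a*t^2) * (1 - a*t^3) := by
    have h : 2*i+2 = 2*(i+1) := by ring
    rw [h, key (i+1) (by omega), e2i1, e2i2]
  have hζ2j : ζ (2*j) = (1 + b) * (1 - b*t) := by rw [key j hj1, e2j]
  have hζ2j2 : ζ (2*j+2) = (1 + b*t^2) * (1 - b*t^3) := by
    have h : 2*j+2 = 2*(j+1) := by ring
    rw [h, key (j+1) (by omega), e2j1, e2j2]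
  rw [hζ2i, hζ2i2, hζ2j, hζ2j2]
  clear_value t a b
  clear hζ key hζ2i hζ2i2 hζ2j hζ2j2 hadef hbdef htdef e2i e2i1 e2i2 e2j e2j1 e2j2
  clear hq hq0 hqne hi hij hj1 i j q ζ
  have ht2 : t^2 ≤ 1/4 := by nlinarith
  have hab : b < a := by
    have h := mul_le_mul_of_nonneg_left ht2 ha0.le
    nlinarith
  have hbt3 : b ≤ t^3 := by
    have : a * t^2 ≤ t * t^2 := mul_le_mul_of_nonneg_right hat (by positivity)
    nlinarith
  have hab4 : a * b ≤ t^4 := by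
    calc a * b ≤ t * t^3 := mul_le_mul hat hbt3 hb0.le ht0.le
    _ = t^4 := by ring
  -- numeric bound
  have b2 : t^2 ≤ (1/2:ℝ)^2 := pow_le_pow_left₀ ht0.le ht 2
  have b4 : t^4 ≤ (1/2:ℝ)^4 := pow_le_pow_left₀ ht0.le ht 4
  have b6 : t^6 ≤ (1/2:ℝ)^6 := pow_le_pow_left₀ ht0.le ht 6
  have b7 : t^7 ≤ (1/2:ℝ)^7 := pow_le_pow_left₀ ht0.le ht 7
  have hP : 0 < 1 - t - t^2 - 2*t^4 - t^6 - t^7 := by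
    norm_num at b2 b4 b6 b7
    linarith
  have h1 : (a+b)*t*(1+t^2) ≤ (t+t^3)*t*(1+t^2) :=
    mul_le_mul_of_nonneg_right
      (mul_le_mul_of_nonneg_right (by linarith) ht0.le) (by positivity)
  have h2 : a*b*(1-t)*t^3 ≤ t^7 := by
    have hpos : (0:ℝ) ≤ (1-t)*t^3 := mul_nonneg (by linarith) (by positivity)
    have h := mul_le_mul_of_nonneg_right hab4 hpos
    have h8 : (0:ℝ) ≤ t^8 := by positivity
    nlinarith
  have hbracket : 0 < (1-t) - (a+b)*t*(1+t^2) - a*b*(1-t)*t^3 := by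
    have expand : (t+t^3)*t*(1+t^2) = t^2+2*t^4+t^6 := by ring
    rw [expand] at h1
    linarith
  have hfact : (1+a)*(1-a*t)*((1+b*t^2)*(1-b*t^3)) -
      (1+a*t^2)*(1-a*t^3)*((1+b)*(1-b*t)) =
      (a-b)*(1-t^2)*((1-t) - (a+b)*t*(1+t^2) - a*b*(1-t)*t^3) := by ring
  have ht2' : (0:ℝ) < 1 - t^2 := by nlinarith
  have hprod := mul_pos (mul_pos (sub_pos.mpr hab) ht2') hbracket
  nlinarith [hfact, hprod]
end

section
/- Define ζ_n(q) = (1 - (-q)^{-n+1})(1 - (-q)^{-n}). For q ≥ 2 and all positive integers n, n', ζ_n(q)·ζ_{n'}(q)·ζ_4(q) ≤ ζ_2(q)²·ζ_{n+n'}(q). -/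
private def Zf (s : ℝ) (m : ℕ) : ℝ := (1 - (-s)^(m-1)) * (1 - (-s)^m)

private lemma Zf_def (s : ℝ) (m : ℕ) : Zf s m = (1 - (-s)^(m-1)) * (1 - (-s)^m) := rfl

private lemma pow_dec {s : ℝ} (h0 : 0 ≤ s) (h2 : s ≤ 1/2) {k m : ℕ} (h : k ≤ m) :
    s ^ m ≤ s ^ k := pow_le_pow_of_le_one h0 (by linarith) h

private lemma Zf_odd {s : ℝ} {m : ℕ} (hm : 1 ≤ m) (ho : Odd m) :
    Zf s m = (1 - s^(m-1)) * (1 + s^m) := by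
  have he : Even (m-1) := Nat.Odd.sub_odd ho odd_one
  rw [Zf_def, he.neg_pow, ho.neg_pow]
  ring

private lemma Zf_even {s : ℝ} {m : ℕ} (hm : 1 ≤ m) (he : Even m) :
    Zf s m = (1 + s^(m-1)) * (1 - s^m) := by
  have ho : Odd (m-1) := Nat.Even.sub_odd hm he odd_one
  rw [Zf_def, ho.neg_pow, he.neg_pow]
  ring

private lemma Zf_nonneg {s : ℝ} (h0 : 0 ≤ s) (h2 : s ≤ 1/2) (m : ℕ) : 0 ≤ Zf s m := by
  have key : ∀ k : ℕ, (-s)^k ≤ 1 := by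
    intro k
    calc (-s)^k ≤ |(-s)^k| := le_abs_self _
    _ = s ^ k := by rw [abs_pow, abs_neg, abs_of_nonneg h0]
    _ ≤ 1 := pow_le_one₀ h0 (by linarith)
  exact mul_nonneg (by linarith [key (m-1)]) (by linarith [key m])

private lemma Zf_odd_le_one {s : ℝ} (h0 : 0 ≤ s) (h2 : s ≤ 1/2) {m : ℕ} (hm : 3 ≤ m)
    (ho : Odd m) : Zf s m ≤ 1 := by
  rw [Zf_odd (by omega) ho]
  have h1 : s ^ m ≤ s ^ (m-1) := pow_dec h0 h2 (by omega)
  have h2' : 0 ≤ s ^ (m-1) := pow_nonneg h0 _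
  have h3 : 0 ≤ s ^ m := pow_nonneg h0 _
  nlinarith [mul_nonneg h2' h3]

private lemma Zf_odd_ge {s : ℝ} (h0 : 0 ≤ s) (h2 : s ≤ 1/2) {m : ℕ} (hm : 5 ≤ m)
    (ho : Odd m) : 1 - s^4 ≤ Zf s m := by
  rw [Zf_odd (by omega) ho]
  have h1 : s ^ (m-1) ≤ s ^ 4 := pow_dec h0 h2 (by omega)
  have h4 : s ^ 4 ≤ 1 := pow_le_one₀ h0 (by linarith)
  have h2' : 0 ≤ s ^ (m-1) := pow_nonneg h0 _
  have h3 : 0 ≤ s ^ m := pow_nonneg h0 _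
  nlinarith [mul_nonneg (by linarith : (0:ℝ) ≤ 1 - s^(m-1)) h3]

private lemma Zf_even_ge_one {s : ℝ} (h0 : 0 ≤ s) (h2 : s ≤ 1/2) {m : ℕ} (hm : 2 ≤ m)
    (he : Even m) : 1 ≤ Zf s m := by
  rw [Zf_even (by omega) he]
  have hsm : s ^ m = s ^ (m-1) * s := by
    rw [← pow_succ]; congr 1; omega
  have h1 : s ^ (m-1) ≤ s := by
    calc s ^ (m-1) ≤ s ^ 1 := pow_dec h0 h2 (by omega)
    _ = s := pow_one s
  have h2' : 0 ≤ s ^ (m-1) := pow_nonneg h0 _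
  nlinarith [mul_nonneg (mul_nonneg h2' h2') h0, mul_nonneg h2' h0]

private lemma Zf_even_le {s : ℝ} (h0 : 0 ≤ s) (h2 : s ≤ 1/2) {m : ℕ} (hm : 4 ≤ m)
    (he : Even m) : Zf s m ≤ (1 + s^3) * (1 - s^4) := by
  rw [Zf_even (by omega) he]
  have hsm : s ^ m = s ^ (m-1) * s := by
    rw [← pow_succ]; congr 1; omega
  have h1 : s ^ (m-1) ≤ s ^ 3 := pow_dec h0 h2 (by omega)
  have h2' : 0 ≤ s ^ (m-1) := pow_nonneg h0 _
  have hs4 : s ^ 4 ≤ (1/2:ℝ)^4 := pow_le_pow_left₀ h0 h2 4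
  have hb : 0 ≤ 1 - s - s^4 - s^(m-1)*s := by
    nlinarith [mul_le_mul_of_nonneg_right h1 h0, pow_dec h0 h2 (show (3:ℕ) ≤ 4 by norm_num)]
  nlinarith [mul_nonneg (sub_nonneg.2 h1) hb, hsm]

private lemma S1 {s : ℝ} (h0 : 0 ≤ s) (h2 : s ≤ 1/2) :
    ((1+s^3)*(1-s^4))^2 ≤ (1+s)*(1-s^2) := by
  have hp6 : 0 ≤ 1 - s - 3*s^2 + 2*s^3 - s^5 + (55/16)*s^6 := by
    nlinarith [sq_nonneg (1-2*s), sq_nonneg s, mul_nonneg h0 h0, sq_nonneg (s*(1-2*s)),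
      sq_nonneg (s^2*(1-2*s)), mul_nonneg (mul_nonneg h0 h0) h0, sq_nonneg (s^3),
      mul_nonneg (sub_nonneg.2 h2) h0]
  have f1 : 0 ≤ s^7 * (1 - 2*s) := mul_nonneg (pow_nonneg h0 7) (by linarith)
  have f2 : 0 ≤ s^10 * (1 - s) := mul_nonneg (pow_nonneg h0 10) (by linarith)
  have f3 : s^14 ≤ s^7 * (1/128) := by
    have h : s^7 ≤ (1/2)^7 := pow_le_pow_left₀ h0 (by linarith) 7
    calc s^14 = s^7 * s^7 := by ring
    _ ≤ s^7 * (1/2)^7 := by nlinarith [pow_nonneg h0 7]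
    _ = s^7 * (1/128) := by norm_num
  nlinarith [mul_nonneg h0 hp6, f1, f2, f3]

private lemma SA1 {s : ℝ} (h0 : 0 ≤ s) (h2 : s ≤ 1/2) : 1 ≤ (1+s)*(1-s^2) := by
  nlinarith [mul_nonneg h0 h0, mul_nonneg (mul_nonneg h0 h0) h0]

private lemma SF2 {s : ℝ} (h0 : 0 ≤ s) (h2 : s ≤ 1/2) : 1 ≤ (1+s)*(1-s^2)*(1-s^4) := by
  nlinarith [sq_nonneg s, sq_nonneg (s^2), sq_nonneg (s^3), pow_nonneg h0 3, pow_nonneg h0 4,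
    pow_nonneg h0 5, pow_nonneg h0 6, pow_nonneg h0 7, mul_nonneg (sub_nonneg.2 h2) h0,
    mul_nonneg (mul_nonneg (sub_nonneg.2 h2) h0) h0]

private lemma SF3 {s : ℝ} (h0 : 0 ≤ s) (h2 : s ≤ 1/2) :
    (1+s^3)*(1-s^4) ≤ (1+s)*(1-s^2)*(1-s^4) := by
  have hs4 : s^4 ≤ 1 := by
    calc s^4 ≤ (1/2:ℝ)^4 := pow_le_pow_left₀ h0 h2 4
    _ ≤ 1 := by norm_num
  have h13 : 1 + s^3 ≤ (1+s)*(1-s^2) := by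
    nlinarith [mul_nonneg h0 (sq_nonneg (1-2*s)), mul_nonneg h0 h0]
  nlinarith [mul_le_mul_of_nonneg_right h13 (sub_nonneg.2 hs4)]


private lemma arith_ee2 {a b z zN : ℝ} (ha0 : 0 ≤ a) (hb0 : 0 ≤ b) (hz0 : 0 ≤ z)
    (hzb : z ≤ b) (hba : b^2 ≤ a) (hN : 1 ≤ zN) : a * z * b ≤ a^2 * zN := by
  nlinarith [mul_le_mul_of_nonneg_left (mul_le_mul_of_nonneg_right hzb hb0) ha0,
    mul_le_mul_of_nonneg_left hba ha0,
    mul_le_mul_of_nonneg_left hN (mul_nonneg ha0 ha0)]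

private lemma arith_ee4 {a b z z' zN : ℝ} (ha0 : 0 ≤ a) (hb0 : 0 ≤ b) (hz0 : 0 ≤ z)
    (hz'0 : 0 ≤ z') (hzb : z ≤ b) (hz'b : z' ≤ b) (hba : b^2 ≤ a) (hba1 : b ≤ a)
    (hN : 1 ≤ zN) : z * z' * b ≤ a^2 * zN := by
  nlinarith [mul_le_mul_of_nonneg_right (mul_le_mul hzb hz'b hz'0 hb0) hb0,
    mul_le_mul hba hba1 hb0 ha0,
    mul_le_mul_of_nonneg_left hN (mul_nonneg ha0 ha0)]

private lemma arith_eo2 {a b c z' zN : ℝ} (ha0 : 0 ≤ a) (hb0 : 0 ≤ b)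
    (hz'0 : 0 ≤ z') (hz' : z' ≤ 1) (hbc : b ≤ a*c) (hN : c ≤ zN) :
    a * z' * b ≤ a^2 * zN := by
  nlinarith [mul_le_mul_of_nonneg_left (mul_le_mul_of_nonneg_right hz' hb0) ha0,
    mul_le_mul_of_nonneg_left hbc ha0,
    mul_le_mul_of_nonneg_left hN (mul_nonneg ha0 ha0)]

private lemma arith_eo4 {a b c z z' zN : ℝ} (ha0 : 0 ≤ a) (hb0 : 0 ≤ b) (hz'0 : 0 ≤ z')
    (hzb : z ≤ b) (hz' : z' ≤ 1) (hba : b^2 ≤ a) (hc : 1 ≤ a*c) (hN : c ≤ zN) :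
    z * z' * b ≤ a^2 * zN := by
  nlinarith [mul_le_mul_of_nonneg_right (mul_le_mul hzb hz' hz'0 hb0) hb0,
    mul_le_mul_of_nonneg_left hc ha0,
    mul_le_mul_of_nonneg_left hN (mul_nonneg ha0 ha0)]

private lemma arith_oo {a b z z' zN : ℝ} (ha0 : 0 ≤ a) (hb0 : 0 ≤ b) (hz'0 : 0 ≤ z')
    (hz : z ≤ 1) (hz' : z' ≤ 1) (hba1 : b ≤ a) (ha1 : 1 ≤ a) (hN : 1 ≤ zN) :
    z * z' * b ≤ a^2 * zN := by
  nlinarith [mul_le_mul_of_nonneg_right (mul_le_mul hz hz' hz'0 zero_le_one) hb0,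
    mul_le_mul_of_nonneg_left hN (mul_nonneg ha0 ha0),
    mul_le_mul_of_nonneg_left ha1 ha0]

private lemma key {s : ℝ} (h0 : 0 ≤ s) (h2 : s ≤ 1/2) {n n' : ℕ} (hn : 2 ≤ n) (hn' : 2 ≤ n') :
    Zf s n * Zf s n' * Zf s 4 ≤ (Zf s 2)^2 * Zf s (n+n') := by
  have hA : Zf s 2 = (1+s)*(1-s^2) := by show (1 - (-s)^1) * (1 - (-s)^2) = _; ring
  have hB : Zf s 4 = (1+s^3)*(1-s^4) := by show (1 - (-s)^3) * (1 - (-s)^4) = _; ring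
  have hA0 : 0 ≤ Zf s 2 := Zf_nonneg h0 h2 2
  have hB0 : 0 ≤ Zf s 4 := Zf_nonneg h0 h2 4
  have hZn0 : 0 ≤ Zf s n := Zf_nonneg h0 h2 n
  have hZn'0 : 0 ≤ Zf s n' := Zf_nonneg h0 h2 n'
  have hA1 : 1 ≤ Zf s 2 := by rw [hA]; exact SA1 h0 h2
  have hBA : (Zf s 4)^2 ≤ Zf s 2 := by rw [hA, hB]; exact S1 h0 h2
  have hF2 : 1 ≤ Zf s 2 * (1-s^4) := by rw [hA]; exact SF2 h0 h2
  have hF3 : Zf s 4 ≤ Zf s 2 * (1-s^4) := by rw [hA, hB]; exact SF3 h0 h2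
  have hs40 : (0:ℝ) ≤ 1 - s^4 := by
    have : s^4 ≤ (1/2:ℝ)^4 := pow_le_pow_left₀ h0 h2 4
    nlinarith
  have hBA1 : Zf s 4 ≤ Zf s 2 := by nlinarith [pow_nonneg h0 4, mul_nonneg hA0 (pow_nonneg h0 4)]
  rcases Nat.even_or_odd n with he | ho <;> rcases Nat.even_or_odd n' with he' | ho'
  · -- both even
    have hNe : Even (n + n') := he.add he'
    have hN1 : 1 ≤ Zf s (n+n') := Zf_even_ge_one h0 h2 (by omega) hNe
    by_cases hn2 : n = 2
    · by_cases hn'2 : n' = 2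
      · subst hn2; subst hn'2
        norm_num
        exact le_of_eq (by ring)
      · have h4 : 4 ≤ n' := by have := Nat.even_iff.mp he'; omega
        have hz : Zf s n' ≤ Zf s 4 := by rw [hB]; exact Zf_even_le h0 h2 h4 he'
        subst hn2
        exact arith_ee2 hA0 hB0 hZn'0 hz hBA hN1
    · by_cases hn'2 : n' = 2
      · have h4 : 4 ≤ n := by have := Nat.even_iff.mp he; omega
        have hz : Zf s n ≤ Zf s 4 := by rw [hB]; exact Zf_even_le h0 h2 h4 he
        subst hn'2
        calc Zf s n * Zf s 2 * Zf s 4 = Zf s 2 * Zf s n * Zf s 4 := by ring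
        _ ≤ (Zf s 2)^2 * Zf s (n+2) := arith_ee2 hA0 hB0 hZn0 hz hBA hN1
      · have h4 : 4 ≤ n := by have := Nat.even_iff.mp he; omega
        have h4' : 4 ≤ n' := by have := Nat.even_iff.mp he'; omega
        have hz : Zf s n ≤ Zf s 4 := by rw [hB]; exact Zf_even_le h0 h2 h4 he
        have hz' : Zf s n' ≤ Zf s 4 := by rw [hB]; exact Zf_even_le h0 h2 h4' he'
        exact arith_ee4 hA0 hB0 hZn0 hZn'0 hz hz' hBA hBA1 hN1
  · -- n even, n' odd
    have hNo : Odd (n + n') := he.add_odd ho'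
    have hn'3 : 3 ≤ n' := by have := Nat.odd_iff.mp ho'; omega
    have hN : 1 - s^4 ≤ Zf s (n+n') := Zf_odd_ge h0 h2 (by omega) hNo
    have hz' : Zf s n' ≤ 1 := Zf_odd_le_one h0 h2 hn'3 ho'
    by_cases hn2 : n = 2
    · subst hn2
      exact arith_eo2 hA0 hB0 hZn'0 hz' hF3 hN
    · have h4 : 4 ≤ n := by have := Nat.even_iff.mp he; omega
      have hz : Zf s n ≤ Zf s 4 := by rw [hB]; exact Zf_even_le h0 h2 h4 he
      exact arith_eo4 hA0 hB0 hZn'0 hz hz' hBA hF2 hN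
  · -- n odd, n' even
    have hNo : Odd (n + n') := ho.add_even he'
    have hn3 : 3 ≤ n := by have := Nat.odd_iff.mp ho; omega
    have hN : 1 - s^4 ≤ Zf s (n+n') := Zf_odd_ge h0 h2 (by omega) hNo
    have hz : Zf s n ≤ 1 := Zf_odd_le_one h0 h2 hn3 ho
    by_cases hn'2 : n' = 2
    · subst hn'2
      calc Zf s n * Zf s 2 * Zf s 4 = Zf s 2 * Zf s n * Zf s 4 := by ring
      _ ≤ (Zf s 2)^2 * Zf s (n+2) := arith_eo2 hA0 hB0 hZn0 hz hF3 hN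
    · have h4 : 4 ≤ n' := by have := Nat.even_iff.mp he'; omega
      have hz' : Zf s n' ≤ Zf s 4 := by rw [hB]; exact Zf_even_le h0 h2 h4 he'
      calc Zf s n * Zf s n' * Zf s 4 = Zf s n' * Zf s n * Zf s 4 := by ring
      _ ≤ (Zf s 2)^2 * Zf s (n+n') := arith_eo4 hA0 hB0 hZn0 hz' hz hBA hF2 hN
  · -- both odd
    have hNe : Even (n + n') := Odd.add_odd ho ho'
    have hn3 : 3 ≤ n := by have := Nat.odd_iff.mp ho; omega
    have hn'3 : 3 ≤ n' := by have := Nat.odd_iff.mp ho'; omega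
    have hN1 : 1 ≤ Zf s (n+n') := Zf_even_ge_one h0 h2 (by omega) hNe
    have hz : Zf s n ≤ 1 := Zf_odd_le_one h0 h2 hn3 ho
    have hz' : Zf s n' ≤ 1 := Zf_odd_le_one h0 h2 hn'3 ho'
    exact arith_oo hA0 hB0 hZn'0 hz hz' hBA1 hA1 hN1

/-- With ζ_n(q) = (1 - (-q)^{-n+1})(1 - (-q)^{-n}), q ≥ 2 and n, n' ≥ 1,
ζ_n ζ_{n'} ζ_4 ≤ ζ_2² ζ_{n+n'}. -/
theorem stmt_7 (q : ℝ) (hq : 2 ≤ q) (ζ : ℕ → ℝ)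
    (hζ : ∀ n : ℕ, ζ n = (1 - (-q) ^ (-(n : ℤ) + 1)) * (1 - (-q) ^ (-(n : ℤ))))
    (n n' : ℕ) (hn : 1 ≤ n) (hn' : 1 ≤ n') :
    ζ n * ζ n' * ζ 4 ≤ ζ 2 ^ 2 * ζ (n + n') := by
  have hq0 : (0:ℝ) < q := by linarith
  have h0 : 0 ≤ q⁻¹ := by positivity
  have h2 : q⁻¹ ≤ 1/2 := by
    rw [inv_eq_one_div]
    exact one_div_le_one_div_of_le (by norm_num) hq
  have hzeq : ∀ m : ℕ, 1 ≤ m → ζ m = Zf q⁻¹ m := by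
    intro m hm
    rw [hζ m]
    have e1 : ∀ k : ℕ, (-q) ^ (-(k:ℤ)) = (-(q⁻¹))^k := by
      intro k; rw [zpow_neg, zpow_natCast, ← inv_pow, inv_neg]
    have h : (-(m:ℤ)+1) = -(((m-1:ℕ)):ℤ) := by
      have := Nat.cast_sub hm (R := ℤ); omega
    rw [h, e1, e1]; rfl
  rw [hzeq n hn, hzeq n' hn', hzeq 4 (by norm_num), hzeq 2 (by norm_num),
    hzeq (n+n') (by omega)]
  have z1 : Zf q⁻¹ 1 = 0 := by
    show (1 - (-q⁻¹)^0) * (1 - (-q⁻¹)^1) = 0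
    norm_num
  rcases Nat.lt_or_ge n 2 with hl | hn2
  · have hn1 : n = 1 := by omega
    subst hn1
    rw [z1, zero_mul, zero_mul]
    exact mul_nonneg (sq_nonneg _) (Zf_nonneg h0 h2 _)
  rcases Nat.lt_or_ge n' 2 with hl' | hn'2
  · have hn1 : n' = 1 := by omega
    subst hn1
    rw [z1, mul_zero, zero_mul]
    exact mul_nonneg (sq_nonneg _) (Zf_nonneg h0 h2 _)
  exact key h0 h2 hn2 hn'2
end

section
/- In a non-degenerate symplectic space U of dimension n over F_q, the number of totally isotropic k-subspaces is ∏_{i=0}^{k-1} (q^{n-2i}-1)/(q^{k-i}-1). -/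
set_option linter.unusedSectionVars false
set_option maxHeartbeats 1000000

open LinearMap Module Submodule Finset

section Aux

variable {F : Type} [Field F] [Fintype F] {n : ℕ}
  {B : LinearMap.BilinForm F (Fin n → F)}

lemma mem_orthogonal_span' {ι : Type*} (t : ι → (Fin n → F)) (v : Fin n → F)
    (h : ∀ i, B (t i) v = 0) :
    v ∈ B.orthogonal (span F (Set.range t)) := by
  rw [LinearMap.BilinForm.mem_orthogonal_iff]
  intro w hw
  induction hw using Submodule.span_induction with
  | mem x hx => obtain ⟨i, rfl⟩ := hx; exact h i
  | zero => simp [LinearMap.BilinForm.isOrtho_def]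
  | add x y _ _ hx hy =>
      simp only [LinearMap.BilinForm.isOrtho_def, map_add, LinearMap.add_apply] at *
      simp [hx, hy]
  | smul a x _ hx =>
      simp only [LinearMap.BilinForm.isOrtho_def, map_smul] at *
      simp [hx]

lemma span_iso' {ι : Type*} (t : ι → (Fin n → F)) (h : ∀ a b, B (t a) (t b) = 0) :
    ∀ x ∈ span F (Set.range t), ∀ y ∈ span F (Set.range t), B x y = 0 := by
  have h1 : ∀ x ∈ span F (Set.range t), ∀ b, B x (t b) = 0 := by
    intro x hx b
    have : span F (Set.range t) ≤ ker (B.flip (t b)) := by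
      rw [span_le]; rintro _ ⟨a, rfl⟩; simpa using h a b
    simpa using this hx
  intro x hx y hy
  have : span F (Set.range t) ≤ ker (B x) := by
    rw [span_le]; rintro _ ⟨b, rfl⟩; simpa using h1 x hx b
  simpa using this hy

end Aux

section Aux2
attribute [local instance] Fintype.ofFinite

variable {F : Type} [Field F] [Fintype F] {n : ℕ}
  {B : LinearMap.BilinForm F (Fin n → F)}

lemma card_ortho_diff (hnd : B.Nondegenerate) (halt : B.IsAlt)
    {j : ℕ} (s : Fin j → (Fin n → F)) (hind : LinearIndependent F s)
    (hort : ∀ a b, B (s a) (s b) = 0) :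
    Nat.card {v : Fin n → F //
        v ∈ B.orthogonal (span F (Set.range s)) ∧ v ∉ span F (Set.range s)}
      = Fintype.card F ^ (n - j) - Fintype.card F ^ j := by
  set W := span F (Set.range s) with hWdef
  set O := B.orthogonal W with hOdef
  have hWO : (W : Set (Fin n → F)) ⊆ (O : Set (Fin n → F)) := by
    intro x hx
    rw [SetLike.mem_coe, hOdef, LinearMap.BilinForm.mem_orthogonal_iff]
    exact fun w hw => span_iso' s hort w hw x hx
  have hfinW : finrank F W = j := by
    rw [hWdef, finrank_span_eq_card hind, Fintype.card_fin]
  have hfinO : finrank F O = n - j := by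
    rw [hOdef, LinearMap.BilinForm.finrank_orthogonal hnd, hfinW]
    congr 1
    simp
  have h1 : Nat.card {v : Fin n → F // v ∈ O ∧ v ∉ W}
      = ((O : Set (Fin n → F)) \ (W : Set (Fin n → F))).ncard := by
    rw [← Nat.card_coe_set_eq]
    exact Nat.card_congr (Equiv.subtypeEquivRight (fun v => by simp [Set.mem_diff]))
  rw [h1, Set.ncard_diff hWO (Set.toFinite _)]
  have hO : (O : Set (Fin n → F)).ncard = Fintype.card F ^ (n - j) := by
    rw [← Nat.card_coe_set_eq, ← hfinO, Nat.card_eq_fintype_card]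
    exact Module.card_eq_pow_finrank
  have hW : (W : Set (Fin n → F)).ncard = Fintype.card F ^ j := by
    rw [← Nat.card_coe_set_eq, ← hfinW, Nat.card_eq_fintype_card]
    exact Module.card_eq_pow_finrank
  rw [hO, hW]

end Aux2

section Aux3
attribute [local instance] Fintype.ofFinite

variable {F : Type} [Field F] [Fintype F] {n : ℕ}

def isoSuccEquiv (B : LinearMap.BilinForm F (Fin n → F)) (halt : B.IsAlt) (j : ℕ) :
    {s : Fin (j+1) → (Fin n → F) // LinearIndependent F s ∧ ∀ a b, B (s a) (s b) = 0} ≃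
      Σ s : {s : Fin j → (Fin n → F) // LinearIndependent F s ∧ ∀ a b, B (s a) (s b) = 0},
        {v : Fin n → F // v ∈ B.orthogonal (span F (Set.range s.1)) ∧
          v ∉ span F (Set.range s.1)} where
  toFun s := ⟨⟨Fin.tail s.1, (linearIndependent_fin_succ.mp s.2.1).1,
      fun a b => s.2.2 a.succ b.succ⟩,
    ⟨s.1 0, mem_orthogonal_span' _ _ (fun i => s.2.2 i.succ 0),
      (linearIndependent_fin_succ.mp s.2.1).2⟩⟩
  invFun p := ⟨Fin.cons p.2.1 p.1.1,
    linearIndependent_fin_cons.mpr ⟨p.1.2.1, p.2.2.2⟩, by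
      obtain ⟨⟨s, hind, hort⟩, ⟨v, hvO, hvW⟩⟩ := p
      have hO : ∀ i, B (s i) v = 0 := fun i =>
        (LinearMap.BilinForm.mem_orthogonal_iff.mp hvO) (s i)
          (Submodule.subset_span (Set.mem_range_self i))
      intro a b
      refine Fin.cases ?_ (fun a' => ?_) a <;> refine Fin.cases ?_ (fun b' => ?_) b <;>
        simp only [Fin.cons_zero, Fin.cons_succ]
      · exact halt v
      · exact halt.isRefl (s b') v (hO b')
      · exact hO a'
      · exact hort a' b'⟩
  left_inv s := Subtype.ext (Fin.cons_self_tail s.1)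
  right_inv := fun ⟨⟨s, hs⟩, ⟨v, hv⟩⟩ => by
    simp only [Fin.tail_cons, Fin.cons_zero, Sigma.mk.inj_iff, Subtype.mk.injEq,
      heq_eq_eq, and_self]
    exact ⟨trivial, HEq.rfl⟩

lemma card_isoTup {B : LinearMap.BilinForm F (Fin n → F)}
    (hnd : B.Nondegenerate) (halt : B.IsAlt) (j : ℕ) :
    Nat.card {s : Fin j → (Fin n → F) // LinearIndependent F s ∧ ∀ a b, B (s a) (s b) = 0}
      = ∏ i ∈ Finset.range j, (Fintype.card F ^ (n - i) - Fintype.card F ^ i) := by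
  induction j with
  | zero =>
    have htriv : ∀ s : Fin 0 → (Fin n → F),
        LinearIndependent F s ∧ ∀ a b, B (s a) (s b) = 0 :=
      fun s => ⟨linearIndependent_empty_type, fun a b => a.elim0⟩
    rw [Nat.card_congr (Equiv.subtypeUnivEquiv htriv)]
    simp [Nat.card_eq_fintype_card]
  | succ j ih =>
    rw [Nat.card_congr (isoSuccEquiv B halt j), Nat.card_eq_fintype_card,
      Fintype.card_sigma]
    have hfib : ∀ s : {s : Fin j → (Fin n → F) //
        LinearIndependent F s ∧ ∀ a b, B (s a) (s b) = 0},
        Fintype.card {v : Fin n → F // v ∈ B.orthogonal (span F (Set.range s.1)) ∧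
          v ∉ span F (Set.range s.1)}
          = Fintype.card F ^ (n - j) - Fintype.card F ^ j := fun s => by
      rw [← Nat.card_eq_fintype_card]
      exact card_ortho_diff hnd halt s.1 s.2.1 s.2.2
    rw [Finset.sum_congr rfl (fun s _ => hfib s), Finset.sum_const, Finset.card_univ,
      ← Nat.card_eq_fintype_card, ih, Finset.prod_range_succ, smul_eq_mul]

end Aux3

section Aux4
attribute [local instance] Fintype.ofFinite

variable {F : Type} [Field F] [Fintype F] {n : ℕ}

lemma card_fiber_eq {B : LinearMap.BilinForm F (Fin n → F)} {k : ℕ}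
    (W : Submodule F (Fin n → F)) (hW : finrank F W = k)
    (hiso : ∀ x ∈ W, ∀ y ∈ W, B x y = 0) :
    Nat.card {s : Fin k → (Fin n → F) //
        (LinearIndependent F s ∧ ∀ a b, B (s a) (s b) = 0) ∧ span F (Set.range s) = W}
      = ∏ i ∈ Finset.range k, (Fintype.card F ^ k - Fintype.card F ^ i) := by
  have e : {s : Fin k → (Fin n → F) //
      (LinearIndependent F s ∧ ∀ a b, B (s a) (s b) = 0) ∧ span F (Set.range s) = W} ≃
      {t : Fin k → W // LinearIndependent F t} := by
    refine ⟨fun s => ⟨fun i => ⟨s.1 i, (le_of_eq s.2.2) (Submodule.subset_span (Set.mem_range_self i))⟩, ?_⟩,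
      fun t => ⟨fun i => (t.1 i : Fin n → F), ⟨⟨?_, ?_⟩, ?_⟩⟩, fun s => rfl, fun t => rfl⟩
    · exact LinearIndependent.of_comp W.subtype s.2.1.1
    · exact t.2.map' W.subtype (Submodule.ker_subtype W)
    · exact fun a b => hiso _ (t.1 a).2 _ (t.1 b).2
    · have hsp : span F (Set.range t.1) = ⊤ :=
        t.2.span_eq_top_of_card_eq_finrank' (by simp [hW])
      have : Set.range (fun i => (t.1 i : Fin n → F)) = W.subtype '' Set.range t.1 := by
        ext x; simp
      rw [this, ← Submodule.map_span, hsp, Submodule.map_top, Submodule.range_subtype]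
  rw [Nat.card_congr e]
  have hk : k ≤ finrank F W := le_of_eq hW.symm
  rw [card_linearIndependent hk, hW]
  rw [Fin.prod_univ_eq_prod_range (fun i => Fintype.card F ^ k - Fintype.card F ^ i) k]

def groupEquiv (B : LinearMap.BilinForm F (Fin n → F)) (k : ℕ) :
    {s : Fin k → (Fin n → F) // LinearIndependent F s ∧ ∀ a b, B (s a) (s b) = 0} ≃
      Σ W : {W : Submodule F (Fin n → F) //
          finrank F W = k ∧ ∀ x ∈ W, ∀ y ∈ W, B x y = 0},
        {s : Fin k → (Fin n → F) //
          (LinearIndependent F s ∧ ∀ a b, B (s a) (s b) = 0) ∧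
            span F (Set.range s) = W.1} where
  toFun s := ⟨⟨span F (Set.range s.1),
      by rw [finrank_span_eq_card s.2.1, Fintype.card_fin], span_iso' s.1 s.2.2⟩,
    ⟨s.1, s.2, rfl⟩⟩
  invFun p := ⟨p.2.1, p.2.2.1⟩
  left_inv s := rfl
  right_inv := fun ⟨⟨W, hW⟩, ⟨s, hs, hspan⟩⟩ => by
    have hspan' : span F (Set.range s) = W := hspan
    refine Sigma.ext (Subtype.ext hspan') ?_
    refine (Subtype.heq_iff_coe_eq (fun x => ?_)).mpr rfl
    show (_ ∧ span F (Set.range x) = span F (Set.range s)) ↔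
      (_ ∧ span F (Set.range x) = W)
    rw [hspan']

end Aux4

section Aux5
attribute [local instance] Fintype.ofFinite

variable {F : Type} [Field F] [Fintype F] {n : ℕ}

instance : Finite (Submodule F (Fin n → F)) :=
  Finite.of_injective (fun W => (W : Set (Fin n → F))) SetLike.coe_injective

lemma main_count {B : LinearMap.BilinForm F (Fin n → F)}
    (hnd : B.Nondegenerate) (halt : B.IsAlt) (k : ℕ) :
    Nat.card {W : Submodule F (Fin n → F) //
        finrank F W = k ∧ ∀ x ∈ W, ∀ y ∈ W, B x y = 0}
      * ∏ i ∈ Finset.range k, (Fintype.card F ^ k - Fintype.card F ^ i)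
      = ∏ i ∈ Finset.range k, (Fintype.card F ^ (n - i) - Fintype.card F ^ i) := by
  rw [← card_isoTup hnd halt k, Nat.card_congr (groupEquiv B k),
    Nat.card_eq_fintype_card
      (α := (W : {W : Submodule F (Fin n → F) // finrank F W = k ∧ ∀ x ∈ W, ∀ y ∈ W, B x y = 0}) ×
        {s : Fin k → (Fin n → F) // (LinearIndependent F s ∧ ∀ a b, B (s a) (s b) = 0) ∧
          span F (Set.range s) = W.1}), Fintype.card_sigma]
  have hfib : ∀ W : {W : Submodule F (Fin n → F) //
      finrank F W = k ∧ ∀ x ∈ W, ∀ y ∈ W, B x y = 0},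
      Fintype.card {s : Fin k → (Fin n → F) //
        (LinearIndependent F s ∧ ∀ a b, B (s a) (s b) = 0) ∧ span F (Set.range s) = W.1}
        = ∏ i ∈ Finset.range k, (Fintype.card F ^ k - Fintype.card F ^ i) := fun W => by
    rw [← Nat.card_eq_fintype_card]
    exact card_fiber_eq W.1 W.2.1 W.2.2
  rw [Finset.sum_congr rfl (fun W _ => hfib W),
    Finset.sum_const, Finset.card_univ, smul_eq_mul,
    ← Nat.card_eq_fintype_card (α := {W : Submodule F (Fin n → F) //
      finrank F W = k ∧ ∀ x ∈ W, ∀ y ∈ W, B x y = 0})]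

end Aux5



/-- In a non-degenerate symplectic space of dimension n over F_q, the number of
totally isotropic k-subspaces is ∏_{i=0}^{k-1} (q^{n-2i}-1)/(q^{k-i}-1). -/
theorem stmt_12 (q n k : ℕ) (hq : IsPrimePow q)
    (F : Type) [Field F] [Fintype F] (hF : Fintype.card F = q)
    (B : LinearMap.BilinForm F (Fin n → F)) (halt : B.IsAlt) (hnd : B.Nondegenerate)
    (hk : 2 * k ≤ n) :
    (Nat.card {W : Submodule F (Fin n → F) //
        Module.finrank F W = k ∧ ∀ x ∈ W, ∀ y ∈ W, B x y = 0} : ℝ) =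
      ∏ i ∈ Finset.range k,
        ((q : ℝ) ^ (n - 2 * i) - 1) / ((q : ℝ) ^ (k - i) - 1) := by
  subst hF
  have hq1 : 1 < Fintype.card F := Fintype.one_lt_card
  set q := Fintype.card F with hqdef
  have hq1' : (1 : ℝ) < (q : ℝ) := by exact_mod_cast hq1
  have hq0' : (0 : ℝ) < (q : ℝ) := lt_trans one_pos hq1'
  have hmain := main_count (n := n) hnd halt k
  have e1 : ∀ i ∈ Finset.range k, ((q ^ k - q ^ i : ℕ) : ℝ) = (q : ℝ) ^ k - (q : ℝ) ^ i := by
    intro i hi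
    rw [Nat.cast_sub (Nat.pow_le_pow_right (Nat.lt_of_lt_of_le Nat.zero_lt_one hq1.le)
      (Finset.mem_range.mp hi).le)]
    push_cast; ring
  have e2 : ∀ i ∈ Finset.range k, ((q ^ (n - i) - q ^ i : ℕ) : ℝ)
      = (q : ℝ) ^ (n - i) - (q : ℝ) ^ i := by
    intro i hi
    have hi' : i < k := Finset.mem_range.mp hi
    rw [Nat.cast_sub (Nat.pow_le_pow_right (Nat.lt_of_lt_of_le Nat.zero_lt_one hq1.le)
      (by omega))]
    push_cast; ring
  have hcast : (Nat.card {W : Submodule F (Fin n → F) //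
        Module.finrank F W = k ∧ ∀ x ∈ W, ∀ y ∈ W, B x y = 0} : ℝ)
      * ∏ i ∈ Finset.range k, ((q : ℝ) ^ k - (q : ℝ) ^ i)
      = ∏ i ∈ Finset.range k, ((q : ℝ) ^ (n - i) - (q : ℝ) ^ i) := by
    have h := congrArg (Nat.cast : ℕ → ℝ) hmain
    rw [Nat.cast_mul, Nat.cast_prod, Nat.cast_prod] at h
    rw [Finset.prod_congr rfl e1, Finset.prod_congr rfl e2] at h
    exact h
  have hD0 : (0 : ℝ) < ∏ i ∈ Finset.range k, ((q : ℝ) ^ k - (q : ℝ) ^ i) :=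
    Finset.prod_pos fun i hi => sub_pos.mpr
      (pow_lt_pow_right₀ hq1' (Finset.mem_range.mp hi))
  have hterm : ∀ i ∈ Finset.range k,
      ((q : ℝ) ^ (n - 2 * i) - 1) / ((q : ℝ) ^ (k - i) - 1)
        = ((q : ℝ) ^ (n - i) - (q : ℝ) ^ i) / ((q : ℝ) ^ k - (q : ℝ) ^ i) := by
    intro i hi
    have hi' : i < k := Finset.mem_range.mp hi
    have h1 : (q : ℝ) ^ i * ((q : ℝ) ^ (n - 2 * i) - 1) = (q : ℝ) ^ (n - i) - (q : ℝ) ^ i := by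
      rw [mul_sub, mul_one, ← pow_add]
      congr 2
      omega
    have h2 : (q : ℝ) ^ i * ((q : ℝ) ^ (k - i) - 1) = (q : ℝ) ^ k - (q : ℝ) ^ i := by
      rw [mul_sub, mul_one, ← pow_add]
      congr 2
      omega
    rw [← h1, ← h2, mul_div_mul_left _ _ (pow_ne_zero i hq0'.ne')]
  rw [Finset.prod_congr rfl hterm, Finset.prod_div_distrib, eq_div_iff hD0.ne']
  exact hcast
end

section
/- In a non-degenerate symplectic space U of even dimension n ≥ 4 over F_2, the number of 3-subspaces that are not totally isotropic equals 2^{3(n-2)}/3 · (1-2^{-n})(1-2^{-n+2}). -/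
open Finset Submodule Module
open scoped Classical

section counting

lemma card_filter_congr {α : Type*} [Fintype α] {p q : α → Prop}
    (hp : DecidablePred p) (hq : DecidablePred q) (h : ∀ a, p a ↔ q a) :
    (@Finset.filter α p hp Finset.univ).card = (@Finset.filter α q hq Finset.univ).card := by
  rw [Finset.card_filter, Finset.card_filter]
  exact Finset.sum_congr rfl (fun a _ => by simp [h a])

lemma count_step {α β : Type*} [Fintype α] [Fintype β]
    (p : α → Prop) (q : α → β → Prop) (k : ℕ)
    (h : ∀ a, p a → (Finset.univ.filter (q a)).card = k) :
    (Finset.univ.filter (fun t : α × β => p t.1 ∧ q t.1 t.2)).card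
      = (Finset.univ.filter p).card * k := by
  rw [Finset.card_filter, Fintype.sum_prod_type]
  have h2 : ∀ a : α, (∑ b : β, if p a ∧ q a b then (1:ℕ) else 0) = if p a then k else 0 := by
    intro a
    by_cases hpa : p a
    · simp only [hpa, true_and, if_true]
      rw [← h a hpa, Finset.card_filter]
    · simp [hpa]
  simp_rw [h2]
  rw [← Finset.sum_filter, Finset.sum_const, smul_eq_mul]

lemma count3 {α : Type*} [Fintype α]
    (p1 : α → Prop) (p2 : α → α → Prop) (p3 : α → α → α → Prop) (k1 k2 k3 : ℕ)
    (h1 : (Finset.univ.filter p1).card = k1)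
    (h2 : ∀ x, p1 x → (Finset.univ.filter (p2 x)).card = k2)
    (h3 : ∀ x y, p1 x → p2 x y → (Finset.univ.filter (p3 x y)).card = k3) :
    (Finset.univ.filter (fun t : α × α × α =>
      p1 t.1 ∧ p2 t.1 t.2.1 ∧ p3 t.1 t.2.1 t.2.2)).card = k1 * k2 * k3 := by
  have key := count_step (β := α × α) p1
      (fun x t => p2 x t.1 ∧ p3 x t.1 t.2) (k2 * k3) ?_
  · rw [h1] at key
    rw [← mul_assoc] at key
    rw [← key]
    exact card_filter_congr _ _ (fun a => Iff.rfl)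
  · intro x hx
    have key2 := count_step (p2 x) (p3 x) k3 (fun y hy => h3 x y hx hy)
    rw [h2 x hx] at key2
    rw [← key2]
    exact card_filter_congr _ _ (fun a => Iff.rfl)

end counting
variable {n : ℕ}

lemma card_mem (P : Submodule (ZMod 2) (Fin n → ZMod 2)) :
    (Finset.univ.filter (fun z => z ∈ P)).card = 2 ^ finrank (ZMod 2) P := by
  rw [← Fintype.card_subtype]
  rw [card_eq_pow_finrank (K := ZMod 2), ZMod.card]

lemma count_diff (P W : Submodule (ZMod 2) (Fin n → ZMod 2)) (h : P ≤ W) :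
    (Finset.univ.filter (fun z => z ∈ W ∧ z ∉ P)).card
      = 2 ^ finrank (ZMod 2) W - 2 ^ finrank (ZMod 2) P := by
  have hset : Finset.univ.filter (fun z => z ∈ W ∧ z ∉ P)
      = Finset.univ.filter (fun z => z ∈ W) \ Finset.univ.filter (fun z => z ∈ P) := by
    ext z
    simp only [Finset.mem_filter, Finset.mem_sdiff, Finset.mem_univ, true_and]
  rw [hset, Finset.card_sdiff_of_subset, card_mem, card_mem]
  intro z hz
  simp only [Finset.mem_filter, Finset.mem_univ, true_and] at hz ⊢
  exact h hz

lemma rank_step (P : Submodule (ZMod 2) (Fin n → ZMod 2)) (z : Fin n → ZMod 2) (hz : z ∉ P) :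
    finrank (ZMod 2) ↥(P ⊔ span (ZMod 2) {z}) = finrank (ZMod 2) P + 1 := by
  have hzne : z ≠ 0 := fun h => hz (h ▸ P.zero_mem)
  have hinf : P ⊓ span (ZMod 2) {z} = ⊥ := by
    rw [eq_bot_iff]
    rintro w hw
    obtain ⟨hwP, hwz⟩ := Submodule.mem_inf.mp hw
    rw [Submodule.mem_span_singleton] at hwz
    obtain ⟨c, rfl⟩ := hwz
    have hc : ∀ c : ZMod 2, c = 0 ∨ c = 1 := by decide
    rcases hc c with rfl | rfl
    · simp
    · rw [one_smul] at hwP; exact absurd hwP hz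
  have hd := Submodule.finrank_sup_add_finrank_inf_eq P (span (ZMod 2) {z})
  rw [hinf, finrank_span_singleton hzne, finrank_bot] at hd
  omega

lemma count_notmem (P : Submodule (ZMod 2) (Fin n → ZMod 2)) :
    (Finset.univ.filter (fun z => z ∉ P)).card = 2 ^ n - 2 ^ finrank (ZMod 2) P := by
  have h := count_diff P ⊤ le_top
  rw [finrank_top, Module.finrank_fin_fun] at h
  rw [← h]
  exact card_filter_congr _ _ (fun a => by simp)

lemma finrank_span2 (x y : Fin n → ZMod 2) (hx : x ≠ 0) (hy : y ∉ span (ZMod 2) {x}) :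
    finrank (ZMod 2) (span (ZMod 2) {x, y}) = 2 := by
  rw [show ({x, y} : Set (Fin n → ZMod 2)) = insert x {y} from rfl, Submodule.span_insert,
    rank_step (span (ZMod 2) {x}) y hy, finrank_span_singleton hx]

lemma finrank_span3 (x y z : Fin n → ZMod 2) (hx : x ≠ 0) (hy : y ∉ span (ZMod 2) {x})
    (hz : z ∉ span (ZMod 2) {x, y}) :
    finrank (ZMod 2) (span (ZMod 2) {x, y, z}) = 3 := by
  have hsets : ({x, y, z} : Set (Fin n → ZMod 2)) = {x, y} ∪ {z} := by
    ext w; simp only [Set.mem_insert_iff, Set.mem_singleton_iff, Set.mem_union]; tauto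
  rw [hsets, Submodule.span_union]
  rw [rank_step _ _ hz, finrank_span2 x y hx hy]

variable (B : LinearMap.BilinForm (ZMod 2) (Fin n → ZMod 2))

lemma finrank_ker1 (hnd : B.Nondegenerate) (x : Fin n → ZMod 2) (hx : x ≠ 0) :
    finrank (ZMod 2) (LinearMap.ker (B x)) = n - 1 := by
  have hBx : B x ≠ 0 := by
    intro h
    exact hx (hnd.1 x (fun y => by rw [h]; rfl))
  have hrange : finrank (ZMod 2) (LinearMap.range (B x)) = 1 := by
    have hle : finrank (ZMod 2) (LinearMap.range (B x)) ≤ 1 := by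
      have := Submodule.finrank_le (LinearMap.range (B x))
      simpa using this
    have hne : finrank (ZMod 2) (LinearMap.range (B x)) ≠ 0 := by
      simp only [ne_eq, Submodule.finrank_eq_zero, LinearMap.range_eq_bot]
      exact hBx
    omega
  have h := LinearMap.finrank_range_add_finrank_ker (B x)
  rw [hrange, Module.finrank_fin_fun] at h
  omega

lemma finrank_ker2 (hnd : B.Nondegenerate) (x y : Fin n → ZMod 2) (hx : x ≠ 0)
    (hy : y ∉ span (ZMod 2) {x}) :
    finrank (ZMod 2) ↥(LinearMap.ker (B x) ⊓ LinearMap.ker (B y)) = n - 2 := by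
  have hyne : y ≠ 0 := fun h => hy (h ▸ (span (ZMod 2) {x}).zero_mem)
  have hn1 : 1 ≤ n := by
    rcases Nat.eq_zero_or_pos n with h | h
    · exfalso; apply hx; subst h; ext i; exact absurd i.2 (by omega)
    · exact h
  have hk1 := finrank_ker1 B hnd x hx
  have hk2 := finrank_ker1 B hnd y hyne
  have hnle : ¬ (LinearMap.ker (B y) ≤ LinearMap.ker (B x)) := by
    intro hle
    have heq : LinearMap.ker (B y) = LinearMap.ker (B x) :=
      Submodule.eq_of_le_of_finrank_le hle (by rw [hk1, hk2])
    have hfun : ∀ v, B x v = B y v := by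
      intro v
      have h0 : B x v = 0 ↔ B y v = 0 := by
        rw [← LinearMap.mem_ker, ← LinearMap.mem_ker, heq]
      have : ∀ a b : ZMod 2, (a = 0 ↔ b = 0) → a = b := by decide
      exact this _ _ h0
    have hxy : x + y = 0 := by
      apply hnd.1
      intro v
      rw [map_add, LinearMap.add_apply, hfun v]
      exact CharTwo.add_self_eq_zero _
    have hyx : y = x := by
      have h1 : y = -x := eq_neg_of_add_eq_zero_right hxy
      have h2 : -x = x := by ext i; exact CharTwo.neg_eq _
      rw [h1, h2]
    rw [hyx] at hy
    exact hy (Submodule.mem_span_singleton_self x)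
  have hlt : LinearMap.ker (B x) < LinearMap.ker (B x) ⊔ LinearMap.ker (B y) := by
    refine lt_of_le_of_ne le_sup_left (fun he => hnle (he ▸ le_sup_right))
  have hsuplt := Submodule.finrank_lt_finrank_of_lt hlt
  have hsuple : finrank (ZMod 2) ↥(LinearMap.ker (B x) ⊔ LinearMap.ker (B y)) ≤ n := by
    have := Submodule.finrank_le (LinearMap.ker (B x) ⊔ LinearMap.ker (B y))
    simpa [Module.finrank_fin_fun] using this
  have hd := Submodule.finrank_sup_add_finrank_inf_eq (LinearMap.ker (B x)) (LinearMap.ker (B y))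
  rw [hk1, hk2] at hd
  omega

lemma span_isotropic (halt : B.IsAlt) (x y z : Fin n → ZMod 2)
    (hxy : B x y = 0) (hxz : B x z = 0) (hyz : B y z = 0) :
    ∀ u ∈ span (ZMod 2) ({x, y, z} : Set (Fin n → ZMod 2)),
      ∀ v ∈ span (ZMod 2) ({x, y, z} : Set (Fin n → ZMod 2)), B u v = 0 := by
  have skew : ∀ a b, B a b = 0 → B b a = 0 := by
    intro a b h
    rw [← LinearMap.IsAlt.neg halt a b, h, neg_zero]
  have hgen : ∀ w ∈ ({x, y, z} : Set (Fin n → ZMod 2)),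
      ∀ v ∈ span (ZMod 2) ({x, y, z} : Set (Fin n → ZMod 2)), B w v = 0 := by
    intro w hw v hv
    have hker : span (ZMod 2) ({x, y, z} : Set (Fin n → ZMod 2)) ≤ LinearMap.ker (B w) := by
      rw [Submodule.span_le]
      rintro u hu
      simp only [Set.mem_insert_iff, Set.mem_singleton_iff] at hu hw
      rw [SetLike.mem_coe, LinearMap.mem_ker]
      rcases hw with rfl | rfl | rfl <;> rcases hu with rfl | rfl | rfl <;>
        first
          | exact LinearMap.IsAlt.self_eq_zero halt _
          | exact hxy | exact hxz | exact hyz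
          | exact skew _ _ hxy | exact skew _ _ hxz | exact skew _ _ hyz
    exact LinearMap.mem_ker.mp (hker hv)
  intro u hu v hv
  have hker2 : span (ZMod 2) ({x, y, z} : Set (Fin n → ZMod 2)) ≤ LinearMap.ker (LinearMap.flip B v) := by
    rw [Submodule.span_le]
    intro w hw
    rw [SetLike.mem_coe, LinearMap.mem_ker, LinearMap.flip_apply]
    exact hgen w hw v hv
  have := hker2 hu
  rw [LinearMap.mem_ker, LinearMap.flip_apply] at this
  exact this

/-- In a non-degenerate symplectic space of even dimension n ≥ 4 over F_2, the number
of 3-subspaces that are not totally isotropic equals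
2^{3(n-2)}/3 · (1-2^{-n})(1-2^{-n+2}). -/
theorem stmt_14 (n : ℕ) (hn : 4 ≤ n) (hne : Even n)
    (B : LinearMap.BilinForm (ZMod 2) (Fin n → ZMod 2))
    (halt : B.IsAlt) (hnd : B.Nondegenerate) :
    (Nat.card {W : Submodule (ZMod 2) (Fin n → ZMod 2) //
        Module.finrank (ZMod 2) W = 3 ∧ ¬(∀ x ∈ W, ∀ y ∈ W, B x y = 0)} : ℝ) =
      2 ^ (3 * (n - 2)) / 3 *
        ((1 - (2 : ℝ) ^ (-(n : ℤ))) * (1 - (2 : ℝ) ^ (-(n : ℤ) + 2))) := by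
  classical
  haveI : Finite (Submodule (ZMod 2) (Fin n → ZMod 2)) :=
    Finite.of_injective (fun W => (W : Set (Fin n → ZMod 2))) SetLike.coe_injective
  haveI := Fintype.ofFinite (Submodule (ZMod 2) (Fin n → ZMod 2))
  set α := Fin n → ZMod 2 with hα
  set pred : Submodule (ZMod 2) α → Prop :=
    fun W => finrank (ZMod 2) W = 3 ∧ ¬(∀ x ∈ W, ∀ y ∈ W, B x y = 0) with hpreddef
  set S : Finset (Submodule (ZMod 2) α) := Finset.univ.filter pred with hSdef
  have hScard : Nat.card {W : Submodule (ZMod 2) α //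
      Module.finrank (ZMod 2) W = 3 ∧ ¬(∀ x ∈ W, ∀ y ∈ W, B x y = 0)} = S.card := by
    rw [Nat.card_eq_fintype_card, hSdef]
    rw [Fintype.card_subtype]
  -- basic skew fact
  have skew : ∀ a b : α, B a b = 0 → B b a = 0 := by
    intro a b h
    rw [← LinearMap.IsAlt.neg halt a b, h, neg_zero]
  -- the three step predicates
  set p1 : α → Prop := fun x => x ∉ (⊥ : Submodule (ZMod 2) α) with hp1def
  set p2 : α → α → Prop := fun x y => y ∉ span (ZMod 2) {x} with hp2def
  set p3 : α → α → α → Prop := fun x y z => z ∉ span (ZMod 2) {x, y} with hp3def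
  set q2 : α → α → Prop := fun x y => y ∉ span (ZMod 2) {x} ∧ B x y = 0 with hq2def
  set q3 : α → α → α → Prop :=
    fun x y z => z ∉ span (ZMod 2) {x, y} ∧ (B x z = 0 ∧ B y z = 0) with hq3def
  have hp1ne : ∀ x : α, p1 x → x ≠ 0 := by
    intro x hx; simpa [hp1def] using hx
  -- count of all "flag" triples
  have hA : (Finset.univ.filter (fun t : α × α × α =>
      p1 t.1 ∧ p2 t.1 t.2.1 ∧ p3 t.1 t.2.1 t.2.2)).card = (2^n - 1) * (2^n - 2) * (2^n - 4) := by
    have hcnt := count3 p1 p2 p3 (2^n - 1) (2^n - 2) (2^n - 4) ?_ ?_ ?_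
    · rw [← hcnt]
      exact card_filter_congr _ _ (fun t => Iff.rfl)
    · have h := count_notmem (⊥ : Submodule (ZMod 2) α)
      rw [finrank_bot, pow_zero] at h
      rw [← h]
      exact card_filter_congr _ _ (fun a => by simp [hp1def])
    · intro x hx
      have h := count_notmem (span (ZMod 2) {x})
      rw [finrank_span_singleton (hp1ne x hx), pow_one] at h
      rw [← h]
      exact card_filter_congr _ _ (fun a => Iff.rfl)
    · intro x y hx hy
      have h := count_notmem (span (ZMod 2) {x, y})
      rw [finrank_span2 x y (hp1ne x hx) hy] at h
      norm_num at h
      rw [← h]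
      exact card_filter_congr _ _ (fun a => Iff.rfl)
  -- count of pairwise-orthogonal flag triples
  have hO : (Finset.univ.filter (fun t : α × α × α =>
      p1 t.1 ∧ q2 t.1 t.2.1 ∧ q3 t.1 t.2.1 t.2.2)).card
      = (2^n - 1) * (2^(n-1) - 2) * (2^(n-2) - 4) := by
    have hcnt := count3 p1 q2 q3 (2^n - 1) (2^(n-1) - 2) (2^(n-2) - 4) ?_ ?_ ?_
    · rw [← hcnt]
      exact card_filter_congr _ _ (fun t => Iff.rfl)
    · have h := count_notmem (⊥ : Submodule (ZMod 2) α)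
      rw [finrank_bot, pow_zero] at h
      rw [← h]
      exact card_filter_congr _ _ (fun a => by simp [hp1def])
    · intro x hx
      have hx0 := hp1ne x hx
      have hle : span (ZMod 2) {x} ≤ LinearMap.ker (B x) := by
        rw [Submodule.span_le, Set.singleton_subset_iff]
        exact LinearMap.mem_ker.mpr (LinearMap.IsAlt.self_eq_zero halt x)
      have h := count_diff (span (ZMod 2) {x}) (LinearMap.ker (B x)) hle
      rw [finrank_ker1 B hnd x hx0, finrank_span_singleton hx0, pow_one] at h
      rw [← h]
      exact card_filter_congr _ _ (fun a => by
        simp only [hq2def, LinearMap.mem_ker]; tauto)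
    · intro x y hx hy
      have hx0 := hp1ne x hx
      obtain ⟨hy1, hy2⟩ := hy
      have hle : span (ZMod 2) {x, y} ≤ LinearMap.ker (B x) ⊓ LinearMap.ker (B y) := by
        rw [Submodule.span_le]
        intro w hw
        simp only [Set.mem_insert_iff, Set.mem_singleton_iff] at hw
        rw [SetLike.mem_coe, Submodule.mem_inf, LinearMap.mem_ker, LinearMap.mem_ker]
        rcases hw with rfl | rfl
        · exact ⟨LinearMap.IsAlt.self_eq_zero halt w, skew w y hy2⟩
        · exact ⟨hy2, LinearMap.IsAlt.self_eq_zero halt w⟩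
      have h := count_diff (span (ZMod 2) {x, y}) (LinearMap.ker (B x) ⊓ LinearMap.ker (B y)) hle
      rw [finrank_ker2 B hnd x y hx0 hy1, finrank_span2 x y hx0 hy1] at h
      norm_num at h
      rw [← h]
      exact card_filter_congr _ _ (fun a => by
        simp only [hq3def, Submodule.mem_inf, LinearMap.mem_ker]; tauto)
  -- the set of good triples
  set Cnd : α × α × α → Prop :=
    fun t => p1 t.1 ∧ p2 t.1 t.2.1 ∧ p3 t.1 t.2.1 t.2.2 with hCnddef
  set Orth : α × α × α → Prop :=
    fun t => B t.1 t.2.1 = 0 ∧ B t.1 t.2.2 = 0 ∧ B t.2.1 t.2.2 = 0 with hOrthdef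
  set T : Finset (α × α × α) := Finset.univ.filter (fun t => Cnd t ∧ ¬ Orth t) with hTdef
  have hsplit : (Finset.univ.filter (fun t => Cnd t ∧ Orth t)).card + T.card
      = (Finset.univ.filter Cnd).card := by
    have h0 := Finset.card_filter_add_card_filter_not
      (s := Finset.univ.filter Cnd) (p := Orth)
    rw [Finset.filter_filter, Finset.filter_filter] at h0
    rw [← h0, hTdef]
  have hCO : (Finset.univ.filter (fun t => Cnd t ∧ Orth t)).card
      = (2^n - 1) * (2^(n-1) - 2) * (2^(n-2) - 4) := by
    rw [← hO]
    exact card_filter_congr _ _ (fun t => by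
      simp only [hCnddef, hOrthdef, hq2def, hq3def, hp2def, hp3def]; tauto)
  -- fibration over the span
  have hmaps : ∀ t ∈ T, span (ZMod 2) {t.1, t.2.1, t.2.2} ∈ S := by
    intro t ht
    rw [hTdef, Finset.mem_filter] at ht
    obtain ⟨-, ⟨hc1, hc2, hc3⟩, hno⟩ := ht
    rw [hSdef, Finset.mem_filter]
    refine ⟨Finset.mem_univ _, ?_, ?_⟩
    · exact finrank_span3 _ _ _ (hp1ne _ hc1) hc2 hc3
    · intro hall
      apply hno
      rw [hOrthdef]
      refine ⟨?_, ?_, ?_⟩ <;>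
        exact hall _ (Submodule.subset_span (by simp)) _ (Submodule.subset_span (by simp))
  have hfib := Finset.card_eq_sum_card_fiberwise hmaps
  have hfibcard : ∀ W ∈ S, (T.filter (fun t => span (ZMod 2) {t.1, t.2.1, t.2.2} = W)).card
      = 168 := by
    intro W hW
    rw [hSdef, Finset.mem_filter] at hW
    obtain ⟨-, hW3, hWni⟩ := hW
    have hTfil : T.filter (fun t => span (ZMod 2) {t.1, t.2.1, t.2.2} = W)
        = Finset.univ.filter (fun t : α × α × α =>
            (t.1 ∈ W ∧ t.1 ∉ (⊥ : Submodule (ZMod 2) α))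
            ∧ ((t.2.1 ∈ W ∧ t.2.1 ∉ span (ZMod 2) {t.1})
            ∧ (t.2.2 ∈ W ∧ t.2.2 ∉ span (ZMod 2) {t.1, t.2.1}))) := by
      ext t
      rw [Finset.mem_filter, hTdef, Finset.mem_filter, Finset.mem_filter]
      simp only [Finset.mem_univ, true_and]
      constructor
      · rintro ⟨⟨⟨hc1, hc2, hc3⟩, hno⟩, hspan⟩
        refine ⟨⟨?_, hc1⟩, ⟨?_, hc2⟩, ⟨?_, hc3⟩⟩ <;>
          · rw [← hspan]
            exact Submodule.subset_span (by simp)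
      · rintro ⟨⟨hm1, hc1⟩, ⟨hm2, hc2⟩, ⟨hm3, hc3⟩⟩
        have hspan : span (ZMod 2) {t.1, t.2.1, t.2.2} = W := by
          apply Submodule.eq_of_le_of_finrank_le
          · rw [Submodule.span_le]
            intro w hw
            simp only [Set.mem_insert_iff, Set.mem_singleton_iff] at hw
            rcases hw with rfl | rfl | rfl <;> assumption
          · rw [hW3, finrank_span3 _ _ _ (hp1ne _ hc1) hc2 hc3]
        refine ⟨⟨⟨hc1, hc2, hc3⟩, ?_⟩, hspan⟩
        intro horth
        rw [hOrthdef] at horth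
        apply hWni
        intro u hu v hv
        rw [← hspan] at hu hv
        exact span_isotropic B halt _ _ _ horth.1 horth.2.1 horth.2.2 u hu v hv
    rw [hTfil]
    have hcnt := count3 (fun x : α => x ∈ W ∧ x ∉ (⊥ : Submodule (ZMod 2) α))
      (fun x y => y ∈ W ∧ y ∉ span (ZMod 2) {x})
      (fun x y z => z ∈ W ∧ z ∉ span (ZMod 2) {x, y}) 7 6 4 ?_ ?_ ?_
    · rw [show (168:ℕ) = 7 * 6 * 4 by norm_num, ← hcnt]
      exact card_filter_congr _ _ (fun t => Iff.rfl)
    · have h := count_diff ⊥ W bot_le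
      rw [hW3, finrank_bot] at h
      norm_num at h
      rw [← h]
      exact card_filter_congr _ _ (fun a => Iff.rfl)
    · intro x hx
      have hx0 : x ≠ 0 := by simpa using hx.2
      have h := count_diff (span (ZMod 2) {x}) W
        (by rw [Submodule.span_le, Set.singleton_subset_iff]; exact hx.1)
      rw [hW3, finrank_span_singleton hx0] at h
      norm_num at h
      rw [← h]
      exact card_filter_congr _ _ (fun a => Iff.rfl)
    · intro x y hx hy
      have hx0 : x ≠ 0 := by simpa using hx.2
      have h := count_diff (span (ZMod 2) {x, y}) W (by
        rw [Submodule.span_le]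
        intro w hw
        simp only [Set.mem_insert_iff, Set.mem_singleton_iff] at hw
        rcases hw with rfl | rfl
        · exact hx.1
        · exact hy.1)
      rw [hW3, finrank_span2 x y hx0 hy.2] at h
      norm_num at h
      rw [← h]
      exact card_filter_congr _ _ (fun a => Iff.rfl)
  have hTcard : T.card = 168 * S.card := by
    rw [hfib, Finset.sum_congr rfl hfibcard, Finset.sum_const, smul_eq_mul, mul_comm]
  -- the key natural number identity
  have key_nat : (2^n - 1) * (2^(n-1) - 2) * (2^(n-2) - 4) + 168 * S.card
      = (2^n - 1) * (2^n - 2) * (2^n - 4) := by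
    rw [← hCO, ← hTcard, hsplit, ← hA]
  -- pass to the reals
  obtain ⟨m, rfl⟩ : ∃ m, n = m + 4 := ⟨n - 4, by omega⟩
  rw [show m + 4 - 1 = m + 3 by omega, show m + 4 - 2 = m + 2 by omega] at key_nat
  have b1 : (1:ℕ) ≤ 2^(m+4) := Nat.one_le_two_pow
  have b2 : (2:ℕ) ≤ 2^(m+3) := by
    calc (2:ℕ) = 2^1 := by norm_num
    _ ≤ 2^(m+3) := Nat.pow_le_pow_right (by norm_num) (by omega)
  have b3 : (4:ℕ) ≤ 2^(m+2) := by
    calc (4:ℕ) = 2^2 := by norm_num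
    _ ≤ 2^(m+2) := Nat.pow_le_pow_right (by norm_num) (by omega)
  have b2' : (2:ℕ) ≤ 2^(m+4) := by
    calc (2:ℕ) = 2^1 := by norm_num
    _ ≤ 2^(m+4) := Nat.pow_le_pow_right (by norm_num) (by omega)
  have b3' : (4:ℕ) ≤ 2^(m+4) := by
    calc (4:ℕ) = 2^2 := by norm_num
    _ ≤ 2^(m+4) := Nat.pow_le_pow_right (by norm_num) (by omega)
  have keyR : ((2:ℝ)^(m+4) - 1) * ((2:ℝ)^(m+3) - 2) * ((2:ℝ)^(m+2) - 4)
      + 168 * (S.card : ℝ)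
      = ((2:ℝ)^(m+4) - 1) * ((2:ℝ)^(m+4) - 2) * ((2:ℝ)^(m+4) - 4) := by
    have hcast := congrArg (fun k : ℕ => (k : ℝ)) key_nat
    simp only [Nat.cast_add, Nat.cast_mul, Nat.cast_sub b1, Nat.cast_sub b2, Nat.cast_sub b3,
      Nat.cast_sub b2', Nat.cast_sub b3', Nat.cast_pow, Nat.cast_ofNat, Nat.cast_one] at hcast
    exact_mod_cast hcast
  rw [hScard]
  have hS : (S.card : ℝ) = (((2:ℝ)^(m+4) - 1) * ((2:ℝ)^(m+4) - 2) * ((2:ℝ)^(m+4) - 4)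
      - ((2:ℝ)^(m+4) - 1) * ((2:ℝ)^(m+3) - 2) * ((2:ℝ)^(m+2) - 4)) / 168 := by
    linarith
  rw [hS]
  have hz1 : (2:ℝ) ^ (-((m + 4 : ℕ) : ℤ)) = ((2:ℝ)^(m+4))⁻¹ := by
    rw [zpow_neg, zpow_natCast]
  have hz2 : (2:ℝ) ^ (-((m + 4 : ℕ) : ℤ) + 2) = ((2:ℝ)^(m+2))⁻¹ := by
    rw [show (-((m + 4 : ℕ) : ℤ) + 2) = -((m + 2 : ℕ) : ℤ) by push_cast; ring,
      zpow_neg, zpow_natCast]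
  rw [hz1, hz2, show 3 * (m + 4 - 2) = 3 * m + 6 by omega]
  have h1 : ((2:ℝ)^(m+4)) ≠ 0 := by positivity
  have h2 : ((2:ℝ)^(m+2)) ≠ 0 := by positivity
  field_simp
  ring
end
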